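/- Let 𝒜 = (A_i : i ∈ [r]) be a presentation of a transversal matroid M on E. For each i, the complement E \ A_i is a flat of M. -/

import Mathlib

/-- `Y` is a partial transversal of the set system `A : Fin r → Set α`. -/
def IsPartialTransversal {α : Type*} {r : ℕ} (A : Fin r → Set α) (Y : Set α) : Prop :=
  ∃ φ : α → Fin r, Set.InjOn φ Y ∧ ∀ y ∈ Y, y ∈ A (φ y)

/-- For a presentation `𝒜 = (A_i)` of a transversal matroid `M` on `E`,
each complement `E ∖ A_i` is a flat of `M`. -/
theorem stmt_11 {α : Type*} {r : ℕ} (E : Set α) (A : Fin r → Set α)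
    (hA : ∀ i, A i ⊆ E)
    (M : Matroid α) (hME : M.E = E)
    (hInd : ∀ I, M.Indep I ↔ I ⊆ E ∧ IsPartialTransversal A I) :
    ∀ i, M.IsFlat (E \ A i) := by
  classical
  intro i
  constructor
  · intro I X hIF hIX x hxX
    by_contra hxF
    have hxE : x ∈ E := hME ▸ hIX.subset_ground hxX
    have hxA : x ∈ A i := by
      by_contra h
      exact hxF ⟨hxE, h⟩
    -- I is independent and I ⊆ E \ A i
    have hIind := hIF.indep
    have hIsub : I ⊆ E \ A i := hIF.subset
    obtain ⟨hIE, φ, hinj, hmem⟩ := (hInd I).mp hIind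
    -- φ never takes value i on I
    have hφi : ∀ y ∈ I, φ y ≠ i := by
      intro y hy h
      exact (hIsub hy).2 (h ▸ hmem y hy)
    -- insert x I is independent
    have hxI : x ∉ I := fun h => (hIsub h).2 hxA
    have key : ∀ y ∈ I, (if y = x then i else φ y) = φ y :=
      fun y hy => if_neg fun h : y = x => hxI (h ▸ hy)
    have hins : M.Indep (insert x I) := by
      rw [hInd]
      refine ⟨Set.insert_subset hxE hIE, fun z => if z = x then i else φ z, ?_, ?_⟩
      · intro a ha b hb hab
        simp only at hab
        rcases ha with rfl | ha
        · rcases hb with rfl | hb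
          · rfl
          · rw [if_pos rfl, key b hb] at hab
            exact absurd hab.symm (hφi b hb)
        · rcases hb with rfl | hb
          · rw [if_pos rfl, key a ha] at hab
            exact absurd hab (hφi a ha)
          · rw [key a ha, key b hb] at hab
            exact hinj ha hb hab
      · intro y hy
        simp only
        rcases hy with rfl | hy
        · rw [if_pos rfl]; exact hxA
        · rw [key y hy]; exact hmem y hy
    have := hIX.mem_of_insert_indep hxX hins
    exact hxF (hIsub this)
  · rw [hME]
    exact Set.diff_subset
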